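/- Let y, z, x_1, ..., x_t ∈ A satisfy y ≥' x_1 ≥' x_2 ≥' ... ≥' x_t (where ≥' means strictly greater in the natural order, or equal barred letters) and y ≤ z. Suppose it is not the case that y = z↓, and it is not the case that y = z with both barred. Then the congruence y x_1 x_2 ··· x_t z ≡ y z x_1 x_2 ··· x_t holds modulo the ideal I_Kron. -/

import Mathlib

open scoped BigOperators
open Classical

noncomputable section

namespace NCS

/-- A colored letter: an element of `Fin N` together with a `Bool` which is
`true` for barred letters and `false` for unbarred letters. -/
abbrev Letter (N : ℕ) := Fin N × Bool

variable {N : ℕ}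

/-- The key of the natural order `1 < 1̄ < 2 < 2̄ < ⋯ < N < N̄`. -/
def natKey (x : Letter N) : ℕ := 2 * x.1.val + (if x.2 then 1 else 0)

/-- The key of the big bar order `1 ≺ ⋯ ≺ N ≺ 1̄ ≺ ⋯ ≺ N̄`. -/
def barKey (N : ℕ) (x : Letter N) : ℕ := if x.2 then N + x.1.val else x.1.val

/-- A shuffle order on the alphabet, encoded by an injective key function which is
increasing on unbarred letters and on barred letters. -/
def IsShuffleKey (key : Letter N → ℕ) : Prop :=
  Function.Injective key ∧
  (∀ a b : Fin N, a < b → key (a, false) < key (b, false)) ∧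
  (∀ a b : Fin N, a < b → key (a, true) < key (b, true))

/-- The free associative `ℤ`-algebra on the alphabet. -/
abbrev FA (N : ℕ) := MonoidAlgebra ℤ (FreeMonoid (Letter N))

/-- The monomial of a colored word. -/
def wrd (w : List (Letter N)) : FA N := MonoidAlgebra.single (FreeMonoid.ofList w) 1

/-- `y ≥' x` : `y > x`, or `y` and `x` are equal barred letters. -/
def colGE (key : Letter N → ℕ) (y x : Letter N) : Prop :=
  key x < key y ∨ (y = x ∧ y.2 = true)

/-- `y ≤'' z` : `y < z`, or `y` and `z` are equal unbarred letters. -/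
def rowLE (key : Letter N → ℕ) (y z : Letter N) : Prop :=
  key y < key z ∨ (y = z ∧ y.2 = false)

/-- `x ≤col y` : `x < y`, or `x` and `y` are equal barred letters. -/
def colLE (key : Letter N → ℕ) (x y : Letter N) : Prop :=
  key x < key y ∨ (x = y ∧ x.2 = true)

/-- The noncommutative super elementary symmetric function `e_k(S)` with letters
restricted to the set `S`. -/
def eSet (key : Letter N → ℕ) (S : Set (Letter N)) (k : ℕ) : FA N :=
  ∑ f ∈ (Finset.univ : Finset (Fin k → Letter N)).filter
      (fun f => (∀ i, f i ∈ S) ∧ ∀ i j : Fin k, (j : ℕ) = (i : ℕ) + 1 → colGE key (f i) (f j)),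
    wrd (List.ofFn f)

/-- The noncommutative super elementary symmetric function `e_k(u)`. -/
def eU (key : Letter N → ℕ) (k : ℕ) : FA N := eSet key Set.univ k

/-- `e_k(u)` with integer index; `0` for negative `k`. -/
def eZ (key : Letter N → ℕ) (k : ℤ) : FA N := if 0 ≤ k then eU key k.toNat else 0

/-- `e_k(S)` with integer index; `0` for negative `k`. -/
def eSetZ (key : Letter N → ℕ) (S : Set (Letter N)) (k : ℤ) : FA N :=
  if 0 ≤ k then eSet key S k.toNat else 0

/-- The noncommutative super homogeneous symmetric function `h_k(u)`. -/
def hU (key : Letter N → ℕ) (k : ℕ) : FA N :=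
  ∑ f ∈ (Finset.univ : Finset (Fin k → Letter N)).filter
      (fun f => ∀ i j : Fin k, (j : ℕ) = (i : ℕ) + 1 → rowLE key (f i) (f j)),
    wrd (List.ofFn f)

/-- The relations generating the two-sided ideal `I_Kron` (with respect to the
natural order; recall `natKey x + 1 = natKey y` says `x = y↓`). -/
inductive kronRel (N : ℕ) : FA N → FA N → Prop
  | rel3 (x y : Letter N) (hy : y.2 = false) (h : natKey x < natKey y) :
      kronRel N (wrd [y, y, x]) (wrd [y, x, y])
  | rel3b (y z : Letter N) (hy : y.2 = false) (h : natKey y < natKey z) :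
      kronRel N (wrd [z, y, y]) (wrd [y, z, y])
  | rel4 (y z : Letter N) (hy : y.2 = true) (h : natKey y < natKey z) :
      kronRel N (wrd [y, y, z]) (wrd [y, z, y])
  | rel4b (x y : Letter N) (hy : y.2 = true) (h : natKey x < natKey y) :
      kronRel N (wrd [x, y, y]) (wrd [y, x, y])
  | rot (x y z : Letter N) (h1 : natKey x + 1 = natKey y) (h2 : natKey y + 1 = natKey z) :
      kronRel N (wrd [x, z, y] - wrd [z, x, y]) (wrd [y, x, z] - wrd [y, z, x])
  | far (x z : Letter N) (h : natKey x + 2 < natKey z) :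
      kronRel N (wrd [x, z]) (wrd [z, x])

/-- The relations generating the ⋖-colored plactic ideal `I_plac^⋖`. -/
inductive placRel (N : ℕ) (key : Letter N → ℕ) : FA N → FA N → Prop
  | k1 (x y z : Letter N) (h1 : key x < key y) (h2 : key y < key z) :
      placRel N key (wrd [x, z, y]) (wrd [z, x, y])
  | k2 (x y z : Letter N) (h1 : key x < key y) (h2 : key y < key z) :
      placRel N key (wrd [y, x, z]) (wrd [y, z, x])
  | k3 (x y : Letter N) (hy : y.2 = false) (h : key x < key y) :
      placRel N key (wrd [y, y, x]) (wrd [y, x, y])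
  | k3b (y z : Letter N) (hy : y.2 = false) (h : key y < key z) :
      placRel N key (wrd [z, y, y]) (wrd [y, z, y])
  | k4 (y z : Letter N) (hy : y.2 = true) (h : key y < key z) :
      placRel N key (wrd [y, y, z]) (wrd [y, z, y])
  | k4b (x y : Letter N) (hy : y.2 = true) (h : key x < key y) :
      placRel N key (wrd [x, y, y]) (wrd [y, x, y])

/-- The relations generating the ideal `I_kronknuth`. -/
inductive kkRel (N : ℕ) : FA N → FA N → Prop
  | rel3 (x y : Letter N) (hy : y.2 = false) (h : natKey x < natKey y) :
      kkRel N (wrd [y, y, x]) (wrd [y, x, y])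
  | rel3b (y z : Letter N) (hy : y.2 = false) (h : natKey y < natKey z) :
      kkRel N (wrd [z, y, y]) (wrd [y, z, y])
  | rel4 (y z : Letter N) (hy : y.2 = true) (h : natKey y < natKey z) :
      kkRel N (wrd [y, y, z]) (wrd [y, z, y])
  | rel4b (x y : Letter N) (hy : y.2 = true) (h : natKey x < natKey y) :
      kkRel N (wrd [x, y, y]) (wrd [y, x, y])
  | rot (x y z : Letter N) (h1 : natKey x + 1 = natKey y) (h2 : natKey y + 1 = natKey z) :
      kkRel N (wrd [x, z, y] - wrd [z, x, y]) (wrd [y, x, z] - wrd [y, z, x])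
  | kk1 (x y z : Letter N) (h1 : natKey x < natKey y) (h2 : natKey y < natKey z)
      (h3 : natKey x + 2 < natKey z) :
      kkRel N (wrd [x, z, y]) (wrd [z, x, y])
  | kk2 (x y z : Letter N) (h1 : natKey x < natKey y) (h2 : natKey y < natKey z)
      (h3 : natKey x + 2 < natKey z) :
      kkRel N (wrd [y, x, z]) (wrd [y, z, x])

end NCS
namespace NCS

variable {N : ℕ}

/-- The ordinary word `w^r`: barred letters shuffled to the right, that subword
reversed and de-barred.  Letters are recorded `1`-indexed. -/
def plainr (w : List (Letter N)) : List ℕ :=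
  (w.filter (fun x => !x.2)).map (fun x => x.1.val + 1) ++
    ((w.filter (fun x => x.2)).reverse).map (fun x => x.1.val + 1)

/-- The number of barred letters of a colored word. -/
def barredCount (w : List (Letter N)) : ℕ := (w.filter (fun x => x.2)).length

/-- An ordinary word (in the `1`-indexed alphabet) is Yamanouchi of content `lam`
(`lam i` = multiplicity of the letter `i+1`). -/
def IsYamOf (lam : ℕ → ℕ) (u : List ℕ) : Prop :=
  (∀ i : ℕ, u.count (i + 1) = lam i) ∧
    ∀ t i : ℕ, (u.drop t).count (i + 2) ≤ (u.drop t).count (i + 1)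

/-- An ordinary word is Yamanouchi (of some content). -/
def IsYamWord (u : List ℕ) : Prop :=
  ∀ t i : ℕ, (u.drop t).count (i + 2) ≤ (u.drop t).count (i + 1)

/-- The set of colored Yamanouchi words of content `lam` with exactly `d` barred letters. -/
def CYW (N : ℕ) (lam : ℕ → ℕ) (d : ℕ) : Set (List (Letter N)) :=
  {w | IsYamOf lam (plainr w) ∧ barredCount w = d}

/-- `CYW` as a finset (all its members have length `n = Σ lam`). -/
def CYWfin (N : ℕ) (lam : ℕ → ℕ) (d n : ℕ) : Finset (List (Letter N)) :=
  ((Finset.univ : Finset (Fin n → Letter N)).image List.ofFn).filter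
    (fun w => w ∈ CYW N lam d)

/-- A set of colored words is shuffle closed. -/
def ShuffleClosed (W : Set (List (Letter N))) : Prop :=
  ∀ (u v : List (Letter N)) (x y : Letter N), x.2 ≠ y.2 →
    (u ++ x :: y :: v) ∈ W → (u ++ y :: x :: v) ∈ W

/-- The ⋖-descent set of a colored word (`0`-indexed positions). -/
def DesSet (key : Letter N → ℕ) (w : List (Letter N)) : Set ℕ :=
  {i | ∃ h : i + 1 < w.length,
    key (w.get ⟨i + 1, h⟩) < key (w.get ⟨i, Nat.lt_of_succ_lt h⟩) ∨
      (w.get ⟨i, Nat.lt_of_succ_lt h⟩ = w.get ⟨i + 1, h⟩ ∧ (w.get ⟨i + 1, h⟩).2 = true)}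

/-- Coefficient of the monomial `m` in Gessel's fundamental quasisymmetric
function `Q_S` for words of length `t`. -/
def Qcoeff (t : ℕ) (S : Set ℕ) (m : ℕ →₀ ℕ) : ℤ :=
  Nat.card {i : Fin t → ℕ //
    (∀ j k : Fin t, j ≤ k → i j ≤ i k) ∧
    (∀ j k : Fin t, (k : ℕ) = (j : ℕ) + 1 → (j : ℕ) ∈ S → i j < i k) ∧
    (∀ v : ℕ, m v = (Finset.univ.filter (fun j : Fin t => i j = v)).card)}

/-- Gessel's fundamental quasisymmetric function as a power series in the
variables `x_0, x_1, …`. -/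
def Qqs (t : ℕ) (S : Set ℕ) : MvPowerSeries ℕ ℤ := fun m => Qcoeff t S m

/-- The boxes of the (possibly restricted) shape with column lengths bounded by
`rows` and row lengths given by `nu`. -/
def shapeFin (nu : ℕ → ℕ) (rows : ℕ) : Finset (ℕ × ℕ) :=
  (Finset.range rows ×ˢ Finset.range (nu 0)).filter (fun p => p.2 < nu p.1)

/-- `E` is a ⋖-colored tableau of shape `nu` (rows weakly increase with equal
letters unbarred; columns weakly increase with equal letters barred). -/
def IsCT (key : Letter N → ℕ) (nu : ℕ → ℕ) (E : ℕ × ℕ → Letter N) : Prop :=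
  (∀ r c : ℕ, c + 1 < nu r → rowLE key (E (r, c)) (E (r, c + 1))) ∧
  (∀ r c : ℕ, c < nu (r + 1) → colLE key (E (r, c)) (E (r + 1, c)))

/-- Pad a partition given on `Fin n` to a function on `ℕ`. -/
def padF {n : ℕ} (f : Fin n → ℕ) : ℕ → ℕ := fun i => if h : i < n then f ⟨i, h⟩ else 0

/-- Extend a filling of the shape to all of `ℕ × ℕ` by a junk letter. -/
def extT (nu : ℕ → ℕ) (rows : ℕ) (junk : Letter N)
    (T : {p : ℕ × ℕ // p ∈ shapeFin nu rows} → Letter N) : ℕ × ℕ → Letter N :=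
  fun p => if h : p ∈ shapeFin nu rows then T ⟨p, h⟩ else junk

/-- The reading word `sqread`: diagonals from southwest to northeast; on each
diagonal the unbarred entries are read in the ↖ direction followed by the barred
entries in the ↘ direction. -/
def sqread (nu : ℕ → ℕ) (rows : ℕ) (E : ℕ × ℕ → Letter N) : List (Letter N) :=
  (List.range (rows + nu 0)).flatMap (fun k =>
    let boxes : List (ℕ × ℕ) := (List.range rows).filterMap (fun (r : ℕ) =>
      let c : ℤ := (r : ℤ) + (k : ℤ) - (rows : ℤ) + 1
      if 0 ≤ c ∧ c.toNat < nu r then some (r, c.toNat) else none)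
    ((boxes.filter (fun b => !(E b).2)).reverse ++ boxes.filter (fun b => (E b).2)).map E)

/-- The column reading word: columns read bottom to top, leftmost column first. -/
def colword (nu : ℕ → ℕ) (rows : ℕ) (E : ℕ × ℕ → Letter N) : List (Letter N) :=
  (List.range (nu 0)).flatMap (fun c =>
    ((List.range rows).filter (fun r => decide (c < nu r))).reverse.map (fun r => E (r, c)))

/-- The Kostka number: semistandard Young tableaux of shape `nu` and content `m`
(entries `1`-indexed; entry `i+1` corresponds to the variable `x_i`). -/
def kostka (nu : ℕ → ℕ) (m : ℕ →₀ ℕ) : ℤ :=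
  Nat.card {T : ℕ × ℕ → ℕ //
    (∀ r c : ℕ, c + 1 < nu r → T (r, c) ≤ T (r, c + 1)) ∧
    (∀ r c : ℕ, c < nu (r + 1) → T (r, c) < T (r + 1, c)) ∧
    (∀ r c : ℕ, c < nu r → 1 ≤ T (r, c)) ∧
    (∀ r c : ℕ, ¬ c < nu r → T (r, c) = 0) ∧
    (∀ i : ℕ, (m i : ℕ) = Nat.card {p : ℕ × ℕ // p.2 < nu p.1 ∧ T p = i + 1})}

/-- The parts of a partition of `n`, as a weakly decreasing list. -/
def partList {n : ℕ} (ν : Nat.Partition n) : List ℕ := (ν.parts.sort (· ≤ ·)).reverse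

/-- The parts of a partition of `n`, as a function `ℕ → ℕ` (`0`-indexed). -/
def partFun {n : ℕ} (ν : Nat.Partition n) : ℕ → ℕ := fun i => (partList ν).getD i 0

/-- The conjugate partition: `ν'_j = #{i < rows : ν_i ≥ j}`. -/
def conjP (nu : ℕ → ℕ) (j : ℕ) (rows : ℕ) : ℕ :=
  ((Finset.range rows).filter (fun i => j ≤ nu i)).card

/-- The noncommutative super Schur function
`𝔍_ν(u) = Σ_{π ∈ S_t} sgn(π) e_{ν'_1+π(1)-1}(u) ⋯ e_{ν'_t+π(t)-t}(u)`, `t = ν_1`. -/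
def JncF (key : Letter N → ℕ) (nu : ℕ → ℕ) (rows : ℕ) : FA N :=
  ∑ π : Equiv.Perm (Fin (nu 0)),
    (Equiv.Perm.sign π : ℤ) •
      (List.ofFn (fun i : Fin (nu 0) =>
        eZ key ((conjP nu (i.1 + 1) rows : ℤ) + ((π i).1 : ℤ) - (i.1 : ℤ)))).prod

end NCS
namespace NCS

variable {N : ℕ}

/-- A partition diagram (as a set of `0`-indexed boxes). -/
def IsPartitionDiagram (P : Finset (ℕ × ℕ)) : Prop :=
  ∀ p ∈ P, ∀ q : ℕ × ℕ, q.1 ≤ p.1 → q.2 ≤ p.2 → q ∈ P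

/-- `p ≤ q` in the northeast order: `q.1 ≤ p.1` and `p.2 ≤ q.2`. -/
def neLE (p q : ℕ × ℕ) : Prop := q.1 ≤ p.1 ∧ p.2 ≤ q.2

/-- A restricted shape: a lower order ideal of a partition diagram for the
northeast order. -/
def IsRestrictedShape (D : Finset (ℕ × ℕ)) : Prop :=
  ∃ P : Finset (ℕ × ℕ), IsPartitionDiagram P ∧ D ⊆ P ∧
    ∀ p ∈ P, ∀ q ∈ D, neLE p q → p ∈ D

/-- A restricted colored tableau (for the natural order). -/
structure RCT (N : ℕ) where
  shape : Finset (ℕ × ℕ)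
  restricted : IsRestrictedShape shape
  entry : ℕ × ℕ → Letter N
  row : ∀ r c : ℕ, (r, c) ∈ shape → (r, c + 1) ∈ shape →
    natKey (entry (r, c)) < natKey (entry (r, c + 1)) ∨
      (entry (r, c) = entry (r, c + 1) ∧ (entry (r, c)).2 = false)
  col : ∀ r c : ℕ, (r, c) ∈ shape → (r + 1, c) ∈ shape →
    natKey (entry (r, c)) < natKey (entry (r + 1, c)) ∨
      (entry (r, c) = entry (r + 1, c) ∧ (entry (r, c)).2 = true)

/-- A ↖ arrow of `R` from the box `tail` (containing `a+1`) to the box `head`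
(containing `a`); the two boxes are opposite corners of a rectangle whose
intersection with the shape is an arrow subtableau. -/
def nwArrow (R : RCT N) (tail head : ℕ × ℕ) : Prop :=
  head ∈ R.shape ∧ tail ∈ R.shape ∧ head.1 < tail.1 ∧ head.2 < tail.2 ∧
  (∃ a b : Fin N, R.entry head = (a, false) ∧ R.entry tail = (b, false) ∧
    (b : ℕ) = (a : ℕ) + 1) ∧
  ((tail.1 = head.1 + 1 ∧ tail.2 = head.2 + 1 ∧ (tail.1, head.2) ∈ R.shape) ∨
   (head.1 + 1 < tail.1 ∧
    (∀ p ∈ R.shape, head.1 ≤ p.1 → p.1 ≤ tail.1 → head.2 ≤ p.2 → p.2 ≤ tail.2 →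
      p.2 = head.2 ∨ p.1 = tail.1) ∧
    (∀ r : ℕ, head.1 ≤ r → r ≤ tail.1 → (r, head.2) ∈ R.shape) ∧
    (∀ c : ℕ, head.2 ≤ c → c ≤ tail.2 → (tail.1, c) ∈ R.shape)))

/-- A ↘ arrow of `R` from the box `tail` (containing `ā`) to the box `head`
(containing `(a+1)`-bar). -/
def seArrow (R : RCT N) (tail head : ℕ × ℕ) : Prop :=
  tail ∈ R.shape ∧ head ∈ R.shape ∧ tail.1 < head.1 ∧ tail.2 < head.2 ∧
  (∃ a b : Fin N, R.entry tail = (a, true) ∧ R.entry head = (b, true) ∧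
    (b : ℕ) = (a : ℕ) + 1) ∧
  ((head.1 = tail.1 + 1 ∧ head.2 = tail.2 + 1 ∧ (head.1, tail.2) ∈ R.shape) ∨
   (tail.2 + 1 < head.2 ∧
    (∀ p ∈ R.shape, tail.1 ≤ p.1 → p.1 ≤ head.1 → tail.2 ≤ p.2 → p.2 ≤ head.2 →
      p.2 = tail.2 ∨ p.1 = head.1) ∧
    (∀ r : ℕ, tail.1 ≤ r → r ≤ head.1 → (r, tail.2) ∈ R.shape) ∧
    (∀ c : ℕ, tail.2 ≤ c → c ≤ head.2 → (head.1, c) ∈ R.shape)))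

/-- A box is the tail of an arrow of `R`. -/
def IsArrowTail (R : RCT N) (β : ℕ × ℕ) : Prop :=
  (∃ h, nwArrow R β h) ∨ (∃ h, seArrow R β h)

/-- A box which is maximal in `D` for the northeast order. -/
def NEMaximal (D : Finset (ℕ × ℕ)) (β : ℕ × ℕ) : Prop :=
  β ∈ D ∧ ∀ q ∈ D, neLE β q → q = β

/-- `L` is an arrow respecting reading order of the RCT `R`: an enumeration of
the boxes compatible with the northeast order, reading every arrow tail before
the corresponding head. -/
def IsARWord (R : RCT N) (L : List (ℕ × ℕ)) : Prop :=
  L.Nodup ∧ (∀ β : ℕ × ℕ, β ∈ L ↔ β ∈ R.shape) ∧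
  (∀ β β' : ℕ × ℕ, β ∈ L → β' ∈ L → neLE β β' → β ≠ β' →
    L.idxOf β < L.idxOf β') ∧
  (∀ t h : ℕ × ℕ, nwArrow R t h ∨ seArrow R t h → L.idxOf t < L.idxOf h)

end NCS
namespace NCS

variable {N : ℕ}

/-! ### Word conversion -/

/-- Rotate a list once to the right. -/
def rotR {α : Type*} (l : List α) : List α := l.rotate (l.length - 1)

/-- Word conversion: fix all letters not satisfying `p` and rotate each maximal
consecutive run of letters satisfying `p` once to the right. -/
def conv {α : Type*} (p : α → Bool) : List α → List α
  | [] => []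
  | x :: xs =>
    if p x = true then
      rotR ((x :: xs).takeWhile p) ++ conv p (xs.dropWhile p)
    else x :: conv p xs
termination_by l => l.length
decreasing_by
  · exact Nat.lt_succ_of_le ((List.dropWhile_suffix p).length_le)
  · exact Nat.lt_succ_self _

/-! ### Ordinary RSK insertion -/

/-- Row bumping: insert `x` into a weakly increasing row, bumping the leftmost
entry strictly greater than `x`. -/
def bumpRow : List ℕ → ℕ → List ℕ × Option ℕ
  | [], x => ([x], none)
  | y :: ys, x =>
    if x < y then (x :: ys, some y)
    else
      let p := bumpRow ys x
      (y :: p.1, p.2)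

/-- Schensted insertion of a letter into a tableau (given as its list of rows). -/
def insertEntry : List (List ℕ) → ℕ → List (List ℕ)
  | [], x => [[x]]
  | row :: rest, x =>
    match bumpRow row x with
    | (row', none) => row' :: rest
    | (row', some y) => row' :: insertEntry rest y

/-- The insertion tableau of an ordinary word. -/
def insertionTableau (w : List ℕ) : List (List ℕ) := w.foldl insertEntry []

/-- A tableau (list of rows) is superstandard: row `i` is filled with `i+1`'s
(`1`-indexed letters). -/
def IsSuperstandard (Q : List (List ℕ)) : Prop :=
  ∀ i : ℕ, ∀ h : i < Q.length, ∀ v ∈ Q.get ⟨i, h⟩, v = i + 1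

/-! ### Standardization -/

/-- The ⋖-standardization of a colored word: occurrences of each letter are
relabelled, smallest letter first, left to right for unbarred letters and
right to left for barred letters, by `1, 2, …`. -/
def stdz (key : Letter N → ℕ) (w : List (Letter N)) : List ℕ :=
  (List.finRange w.length).map (fun i =>
    ((List.finRange w.length).filter
        (fun j => decide (key (w.get j) < key (w.get i)))).length +
    (if (w.get i).2 then
        ((List.finRange w.length).filter
          (fun j => decide (i < j ∧ w.get j = w.get i))).length
      else
        ((List.finRange w.length).filter
          (fun j => decide (j < i ∧ w.get j = w.get i))).length) + 1)

/-- The free `ℤ`-algebra on the ordinary (unbarred) alphabet `ℕ`. -/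
abbrev FAO := MonoidAlgebra ℤ (FreeMonoid ℕ)

/-- The monomial of an ordinary word. -/
def wrdO (w : List ℕ) : FAO := MonoidAlgebra.single (FreeMonoid.ofList w) 1

/-- The ordinary Knuth (plactic) relations. -/
inductive knuthRel : FAO → FAO → Prop
  | k1 (a b c : ℕ) (h1 : a < b) (h2 : b < c) : knuthRel (wrdO [a, c, b]) (wrdO [c, a, b])
  | k2 (a b c : ℕ) (h1 : a < b) (h2 : b < c) : knuthRel (wrdO [b, a, c]) (wrdO [b, c, a])
  | k3 (a b : ℕ) (h : a < b) : knuthRel (wrdO [b, b, a]) (wrdO [b, a, b])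
  | k4 (b c : ℕ) (h : b < c) : knuthRel (wrdO [c, b, b]) (wrdO [b, c, b])

/-! ### Pairing, the noncommutative Cauchy product, symmetric series -/

/-- The bilinear pairing on `U` for which the colored words are orthonormal. -/
def pairU (f g : FA N) : ℤ := ∑ w ∈ f.coeff.support, f.coeff w * g.coeff w

/-- Coefficient of `x^m` in the noncommutative Cauchy product
`Ω(x,u) = Π_j (c_{z_1}(x_j) ⋯ c_{z_{2N}}(x_j))`: the product of the `h_{m_j}(u)`
in increasing order of `j`. -/
def OmegaC (key : Letter N → ℕ) (m : ℕ →₀ ℕ) : FA N :=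
  ((m.support.sort (· ≤ ·)).map (fun j => hU key (m j))).prod

/-- Total degree of a monomial. -/
def degM (m : ℕ →₀ ℕ) : ℕ := m.sum fun _ k => k

/-- Coefficient of `x^m` in the monomial symmetric function `m_ν`. -/
def mCoeff {k : ℕ} (ν : Nat.Partition k) (m : ℕ →₀ ℕ) : ℤ :=
  if Multiset.map (fun j => m j) m.support.val = ν.parts then 1 else 0

/-- `h_ν(u) = h_{ν_1}(u) h_{ν_2}(u) ⋯`. -/
def hProd (key : Letter N → ℕ) (L : List ℕ) : FA N := (L.map (hU key)).prod

/-- Coefficient of `x^m` in `F_γ(x) = Σ_w γ_w Q_{Des(w)}(x)`. -/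
def FgammaC (key : Letter N → ℕ) (γ : FA N) (m : ℕ →₀ ℕ) : ℤ :=
  ∑ w ∈ γ.coeff.support, γ.coeff w *
    Qcoeff (FreeMonoid.toList w).length (DesSet key (FreeMonoid.toList w)) m

/-- A series (given by its coefficients) is symmetric. -/
def SymmSeries (F : (ℕ →₀ ℕ) → ℤ) : Prop :=
  ∀ σ : Equiv.Perm ℕ, ∀ m : ℕ →₀ ℕ, F (Finsupp.mapDomain σ m) = F m

/-! ### Characters of symmetric groups and Kronecker coefficients -/

/-- The power sum polynomial `p_k` in `n` variables. -/
def powS (n k : ℕ) : MvPolynomial (Fin n) ℤ := ∑ j : Fin n, MvPolynomial.X j ^ k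

/-- The Vandermonde alternant `a_δ = Σ_σ sgn(σ) Π_i x_{σ(i)}^{n-1-i}`. -/
def aDelta (n : ℕ) : MvPolynomial (Fin n) ℤ :=
  ∑ σ : Equiv.Perm (Fin n),
    (Equiv.Perm.sign σ : ℤ) • ∏ i : Fin n, MvPolynomial.X (σ i) ^ (n - 1 - (i : ℕ))

/-- The irreducible character `χ^λ` of `S_n` evaluated at `σ`, via the Frobenius
character formula: the coefficient of `x^{λ+δ}` in `a_δ · p_{cycleType σ}`. -/
def chi (n : ℕ) (lam : Fin n → ℕ) (σ : Equiv.Perm (Fin n)) : ℤ :=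
  MvPolynomial.coeff
    (Finsupp.equivFunOnFinite.symm (fun i : Fin n => lam i + (n - 1 - (i : ℕ))))
    (aDelta n * (σ.cycleType.map (fun k => powS n k)).prod)

/-- The hook partition `μ(d) = (n-d, 1^d)`, as a function on `Fin n`. -/
def hookP (n d : ℕ) : Fin n → ℕ :=
  fun i => if (i : ℕ) = 0 then n - d else if (i : ℕ) ≤ d then 1 else 0

/-- `n!` times the Kronecker coefficient `g_{λμν}`, via
`g = (1/n!) Σ_σ χ^λ(σ) χ^μ(σ) χ^ν(σ)`. -/
def kronC (n : ℕ) (lam mu nu : Fin n → ℕ) : ℤ :=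
  ∑ σ : Equiv.Perm (Fin n), chi n lam σ * chi n mu σ * chi n nu σ

/-! ### Power series in `s` and `t` over `U/I_kronknuth` -/

/-- The quotient `U/I_kronknuth`. -/
abbrev QKK (N : ℕ) := RingQuot (kkRel N)

/-- The image of a generator in `U/I_kronknuth`. -/
def uQ (x : Letter N) : QKK N := RingQuot.mkRingHom (kkRel N) (wrd [x])

/-- A power series in `s` (variable `0`) only. -/
def serS (c : ℕ → QKK N) : MvPowerSeries (Fin 2) (QKK N) :=
  fun m => if m 1 = 0 then c (m 0) else 0

/-- A power series in `t` (variable `1`) only. -/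
def serT (c : ℕ → QKK N) : MvPowerSeries (Fin 2) (QKK N) :=
  fun m => if m 0 = 0 then c (m 1) else 0

/-- A constant power series. -/
def constSer (a : QKK N) : MvPowerSeries (Fin 2) (QKK N) :=
  fun m => if m = 0 then a else 0

/-- `f_x = 1 + u_x s` (`x` unbarred), `(1 - u_x s)⁻¹ = Σ_k u_x^k s^k` (`x` barred). -/
def fSer (x : Letter N) : MvPowerSeries (Fin 2) (QKK N) :=
  serS (fun k => if x.2 then uQ x ^ k else if k = 0 then 1 else if k = 1 then uQ x else 0)

/-- The inverse of `f_x`. -/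
def fSerInv (x : Letter N) : MvPowerSeries (Fin 2) (QKK N) :=
  serS (fun k => if x.2 then (if k = 0 then 1 else if k = 1 then -uQ x else 0)
    else (-uQ x) ^ k)

/-- `g_z = 1 + u_z t` (`z` unbarred), `(1 - u_z t)⁻¹` (`z` barred). -/
def gSer (z : Letter N) : MvPowerSeries (Fin 2) (QKK N) :=
  serT (fun k => if z.2 then uQ z ^ k else if k = 0 then 1 else if k = 1 then uQ z else 0)

/-- The inverse of `g_z`. -/
def gSerInv (z : Letter N) : MvPowerSeries (Fin 2) (QKK N) :=
  serT (fun k => if z.2 then (if k = 0 then 1 else if k = 1 then -uQ z else 0)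
    else (-uQ z) ^ k)

end NCS
namespace NCS

variable {N : ℕ}
def Wq (N : ℕ) (l : List (Letter N)) : RingQuot (kronRel N) :=
  RingQuot.mkRingHom (kronRel N) (wrd l)

lemma wrd_append (u v : List (Letter N)) : wrd (u ++ v) = wrd u * wrd v := by
  simp [wrd, MonoidAlgebra.single_mul_single, FreeMonoid.ofList_append]

lemma Wq_append (u v : List (Letter N)) : Wq N (u ++ v) = Wq N u * Wq N v := by
  simp [Wq, wrd_append, map_mul]

lemma Wq_mid {a b : List (Letter N)}
    (h : RingQuot.mkRingHom (kronRel N) (wrd a) = RingQuot.mkRingHom (kronRel N) (wrd b))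
    (u v : List (Letter N)) :
    Wq N (u ++ a ++ v) = Wq N (u ++ b ++ v) := by
  rw [Wq_append, Wq_append, Wq_append, Wq_append]
  show Wq N u * Wq N a * Wq N v = Wq N u * Wq N b * Wq N v
  rw [show Wq N a = Wq N b from h]

lemma Wq_rel {a b : List (Letter N)} (h : kronRel N (wrd a) (wrd b)) (u v : List (Letter N)) :
    Wq N (u ++ a ++ v) = Wq N (u ++ b ++ v) :=
  Wq_mid (RingQuot.mkRingHom_rel h) u v

variable {N : ℕ}

lemma far_mid (a c : Letter N) (h : natKey a + 2 < natKey c) (u v : List (Letter N)) :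
    Wq N (u ++ a :: c :: v) = Wq N (u ++ c :: a :: v) := by
  have := Wq_rel (kronRel.far a c h) u v
  simpa using this

lemma moveZ (z : Letter N) (v : List (Letter N)) (hv : ∀ r ∈ v, natKey r + 2 < natKey z)
    (u : List (Letter N)) :
    Wq N (u ++ v ++ [z]) = Wq N (u ++ z :: v) := by
  induction v generalizing u with
  | nil => simp
  | cons r v ih =>
    have h1 : Wq N (u ++ (r :: v) ++ [z]) = Wq N ((u ++ [r]) ++ v ++ [z]) := by
      simp [List.append_assoc]
    have h2 := ih (fun x hx => hv x (List.mem_cons_of_mem _ hx)) (u ++ [r])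
    have h3 : Wq N ((u ++ [r]) ++ z :: v) = Wq N (u ++ r :: z :: v) := by
      simp [List.append_assoc]
    have h4 := far_mid r z (hv r (List.mem_cons_self)) u v
    rw [h1, h2, h3, h4]

lemma lemM (y b : Letter N) (hy : y.2 = false) (hb : b.2 = true) (hlt : natKey b < natKey y)
    (m : ℕ) (u v : List (Letter N)) :
    Wq N (u ++ y :: (List.replicate m b ++ y :: v)) =
      Wq N (u ++ y :: y :: (List.replicate m b ++ v)) := by
  induction m generalizing v with
  | zero => simp
  | succ m ih =>
    cases m with
    | zero =>
      have := Wq_rel (kronRel.rel3 b y hy hlt) u v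
      simp only [List.replicate] at *
      calc Wq N (u ++ y :: ([b] ++ y :: v)) = Wq N (u ++ [y, b, y] ++ v) := by
            simp [List.append_assoc]
        _ = Wq N (u ++ [y, y, b] ++ v) := (Wq_rel (kronRel.rel3 b y hy hlt) u v).symm
        _ = Wq N (u ++ y :: y :: ([b] ++ v)) := by simp [List.append_assoc]
    | succ k =>
      -- replicate (k+2) b = replicate k b ++ [b, b]
      have hrep : List.replicate (k + 2) b = List.replicate k b ++ [b, b] := by
        rw [show k+2 = k+1+1 from rfl, List.replicate_succ', List.replicate_succ']
        simp
      calc Wq N (u ++ y :: (List.replicate (k + 2) b ++ y :: v))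
          = Wq N ((u ++ y :: List.replicate k b) ++ [b, b, y] ++ v) := by
            rw [hrep]; simp [List.append_assoc]
        _ = Wq N ((u ++ y :: List.replicate k b) ++ [b, y, b] ++ v) :=
            Wq_rel (kronRel.rel4 b y hb hlt) _ _
        _ = Wq N (u ++ y :: (List.replicate (k + 1) b ++ y :: (b :: v))) := by
            rw [List.replicate_succ']
            simp [List.append_assoc]
        _ = Wq N (u ++ y :: y :: (List.replicate (k + 1) b ++ b :: v)) := ih (b :: v)
        _ = Wq N (u ++ y :: y :: (List.replicate (k + 2) b ++ v)) := by
            rw [show List.replicate (k+2) b = List.replicate (k+1) b ++ [b] from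
              List.replicate_succ' ..]
            simp [List.append_assoc]

variable {N : ℕ}

lemma rot_mid (c b y : Letter N) (h1 : natKey c + 1 = natKey b) (h2 : natKey b + 1 = natKey y)
    (u v : List (Letter N)) :
    Wq N (u ++ [b, c, y] ++ v) =
      Wq N (u ++ [b, y, c] ++ v) + Wq N (u ++ [c, y, b] ++ v) - Wq N (u ++ [y, c, b] ++ v) := by
  have h := RingQuot.mkRingHom_rel (kronRel.rot c b y h1 h2)
  rw [map_sub, map_sub] at h
  have key : Wq N [b, c, y] = Wq N [b, y, c] + Wq N [c, y, b] - Wq N [y, c, b] := by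
    have h' : Wq N [c, y, b] - Wq N [y, c, b] = Wq N [b, c, y] - Wq N [b, y, c] := h
    have := sub_eq_iff_eq_add.mp h'.symm
    rw [this]; abel
  simp only [Wq_append, key, mul_add, mul_sub, add_mul, sub_mul]

lemma lemP (y b c : Letter N) (hy : y.2 = false) (hb : b.2 = true)
    (h1 : natKey c + 1 = natKey b) (h2 : natKey b + 1 = natKey y)
    (m : ℕ) (u v : List (Letter N)) :
    Wq N (u ++ y :: (List.replicate m b ++ c :: y :: v)) =
      Wq N (u ++ y :: y :: (List.replicate m b ++ c :: v)) := by
  have hcy : natKey c < natKey y := by omega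
  have hby : natKey b < natKey y := by omega
  induction m generalizing v with
  | zero =>
    calc Wq N (u ++ y :: (List.replicate 0 b ++ c :: y :: v))
        = Wq N (u ++ [y, c, y] ++ v) := by simp [List.append_assoc]
      _ = Wq N (u ++ [y, y, c] ++ v) := (Wq_rel (kronRel.rel3 c y hy hcy) u v).symm
      _ = Wq N (u ++ y :: y :: (List.replicate 0 b ++ c :: v)) := by simp [List.append_assoc]
  | succ m ih =>
    have hrep : List.replicate (m + 1) b = List.replicate m b ++ [b] := List.replicate_succ' ..
    calc Wq N (u ++ y :: (List.replicate (m + 1) b ++ c :: y :: v))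
        = Wq N ((u ++ y :: List.replicate m b) ++ [b, c, y] ++ v) := by
          rw [hrep]; simp [List.append_assoc]
      _ = Wq N ((u ++ y :: List.replicate m b) ++ [b, y, c] ++ v) +
          Wq N ((u ++ y :: List.replicate m b) ++ [c, y, b] ++ v) -
          Wq N ((u ++ y :: List.replicate m b) ++ [y, c, b] ++ v) := rot_mid c b y h1 h2 _ _
      _ = Wq N (u ++ y :: y :: (List.replicate (m + 1) b ++ c :: v)) := by
          have t1 : Wq N ((u ++ y :: List.replicate m b) ++ [b, y, c] ++ v) =
              Wq N (u ++ y :: y :: (List.replicate (m + 1) b ++ c :: v)) := by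
            have := lemM y b hy hb hby (m + 1) u (c :: v)
            rw [hrep] at this ⊢
            calc Wq N ((u ++ y :: List.replicate m b) ++ [b, y, c] ++ v)
                = Wq N (u ++ y :: (List.replicate m b ++ [b] ++ y :: c :: v)) := by
                  simp [List.append_assoc]
              _ = Wq N (u ++ y :: y :: (List.replicate m b ++ [b] ++ c :: v)) := this
          have t2 : Wq N ((u ++ y :: List.replicate m b) ++ [c, y, b] ++ v) =
              Wq N (u ++ y :: y :: (List.replicate m b ++ c :: b :: v)) := by
            have := ih (b :: v)
            calc Wq N ((u ++ y :: List.replicate m b) ++ [c, y, b] ++ v)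
                = Wq N (u ++ y :: (List.replicate m b ++ c :: y :: (b :: v))) := by
                  simp [List.append_assoc]
              _ = Wq N (u ++ y :: y :: (List.replicate m b ++ c :: b :: v)) := this
          have t3 : Wq N ((u ++ y :: List.replicate m b) ++ [y, c, b] ++ v) =
              Wq N (u ++ y :: y :: (List.replicate m b ++ c :: b :: v)) := by
            have := lemM y b hy hb hby m u (c :: b :: v)
            calc Wq N ((u ++ y :: List.replicate m b) ++ [y, c, b] ++ v)
                = Wq N (u ++ y :: (List.replicate m b ++ y :: (c :: b :: v))) := by
                  simp [List.append_assoc]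
              _ = Wq N (u ++ y :: y :: (List.replicate m b ++ c :: b :: v)) := this
          rw [t1, t2, t3]; abel

variable {N : ℕ}

lemma colGE_le {p q : Letter N} (h : colGE natKey p q) : natKey q ≤ natKey p := by
  rcases h with h | ⟨rfl, _⟩ <;> omega

lemma chain_le {p : Letter N} {l : List (Letter N)}
    (h : List.Chain' (colGE natKey) (p :: l)) : ∀ r ∈ l, natKey r ≤ natKey p := by
  induction l generalizing p with
  | nil => simp
  | cons q l ih =>
    simp only [List.Chain', List.isChain_cons_cons] at h
    intro r hr
    rcases List.mem_cons.mp hr with rfl | hr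
    · exact colGE_le h.1
    · exact le_trans (ih h.2 r hr) (colGE_le h.1)

lemma natKey_inj {p q : Letter N} (h : natKey p = natKey q) : p = q := by
  obtain ⟨⟨a, ha⟩, pb⟩ := p
  obtain ⟨⟨b, hb⟩, qb⟩ := q
  simp only [natKey] at h
  cases pb <;> cases qb <;> simp_all <;> omega

lemma barred_of_odd {p : Letter N} (h : natKey p % 2 = 1) : p.2 = true := by
  cases hp : p.2
  · simp [natKey, hp] at h
  · rfl

lemma unbarred_of_even {p : Letter N} (h : natKey p % 2 = 0) : p.2 = false := by
  cases hp : p.2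
  · rfl
  · simp [natKey, hp, Nat.mul_add_mod] at h

lemma parity_key {p : Letter N} : natKey p % 2 = if p.2 then 1 else 0 := by
  cases hp : p.2 <;> simp [natKey, hp, Nat.mul_add_mod]

lemma chain_decomp (x : Letter N) (l : List (Letter N))
    (h : List.Chain' (colGE natKey) (x :: l)) :
    ∃ m rest, x :: l = List.replicate (m + 1) x ++ rest ∧
      (∀ r ∈ rest, natKey r < natKey x) ∧ List.Chain' (colGE natKey) rest := by
  induction l with
  | nil => exact ⟨0, [], by simp, by simp, List.isChain_nil⟩
  | cons d l ih =>
    simp only [List.Chain', List.isChain_cons_cons] at h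
    by_cases hd : d = x
    · subst hd
      obtain ⟨m, rest, heq, hlt, hch⟩ := ih h.2
      exact ⟨m + 1, rest, by rw [List.replicate_succ, List.cons_append, ← heq], hlt, hch⟩
    · refine ⟨0, d :: l, by simp, ?_, h.2⟩
      have hdx : natKey d < natKey x := by
        rcases h.1 with h' | ⟨h', _⟩
        · exact h'
        · exact absurd h'.symm hd
      intro r hr
      rcases List.mem_cons.mp hr with rfl | hr
      · exact hdx
      · exact lt_of_le_of_lt (chain_le h.2 r hr) hdx

variable {N : ℕ}

lemma chain_lt_unbarred {d : Letter N} {l : List (Letter N)}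
    (h : List.Chain' (colGE natKey) (d :: l)) (hd : d.2 = false) :
    ∀ r ∈ l, natKey r < natKey d := by
  cases l with
  | nil => simp
  | cons e l' =>
    simp only [List.Chain', List.isChain_cons_cons] at h
    have he : natKey e < natKey d := by
      rcases h.1 with h' | ⟨h', h''⟩
      · exact h'
      · rw [hd] at h''; exact absurd h'' (by simp)
    intro r hr
    rcases List.mem_cons.mp hr with rfl | hr
    · exact he
    · exact lt_of_le_of_lt (chain_le h.2 r hr) he

lemma main_aux : ∀ (n : ℕ) (xs : List (Letter N)), xs.length ≤ n →
    ∀ (u : List (Letter N)) (y z : Letter N),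
    List.Chain' (colGE natKey) (y :: xs) →
    natKey y ≤ natKey z → ¬ natKey y + 1 = natKey z → ¬ (y = z ∧ y.2 = true) →
    Wq N (u ++ y :: (xs ++ [z])) = Wq N (u ++ y :: z :: xs) := by
  intro n
  induction n with
  | zero =>
    intro xs hlen u y z _ _ _ _
    have : xs = [] := List.eq_nil_of_length_eq_zero (Nat.le_zero.mp hlen)
    subst this; rfl
  | succ n ih =>
    intro xs hlen u y z hchain hyz h1 h2
    cases xs with
    | nil => rfl
    | cons x xs' =>
      simp only [List.Chain', List.isChain_cons_cons] at hchain
      obtain ⟨hGE, hchain'⟩ := hchain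
      have hlen' : xs'.length ≤ n := by simpa using Nat.le_of_succ_le_succ hlen
      have hxy : natKey x ≤ natKey y := colGE_le hGE
      by_cases hfar : natKey x + 2 < natKey z
      · -- commute z past x via recursion then far
        have hrec := ih xs' hlen' (u ++ [y]) x z hchain' (by omega) (by omega)
          (by rintro ⟨rfl, -⟩; omega)
        calc Wq N (u ++ y :: ((x :: xs') ++ [z]))
            = Wq N ((u ++ [y]) ++ x :: (xs' ++ [z])) := by simp [List.append_assoc]
          _ = Wq N ((u ++ [y]) ++ x :: z :: xs') := hrec
          _ = Wq N ((u ++ [y]) ++ z :: x :: xs') := far_mid x z hfar (u ++ [y]) xs'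
          _ = Wq N (u ++ y :: z :: x :: xs') := by simp [List.append_assoc]
      · have hcase : natKey z = natKey y ∨ natKey z = natKey y + 2 := by omega
        rcases hcase with hzy | hzy
        · -- z = z
          have hz : z = y := natKey_inj hzy
          subst hz
          have hyu : z.2 = false := by
            cases hb : z.2
            · rfl
            · exact absurd ⟨rfl, hb⟩ h2
          have hxlt : natKey x < natKey z := by
            rcases hGE with h' | ⟨-, h''⟩
            · exact h'
            · rw [hyu] at h''; exact absurd h'' (by simp)
          have hxcase : natKey x + 1 = natKey z ∨ natKey x + 2 = natKey z := by omega
          rcases hxcase with hx1 | hx2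
          · -- hard case: x = z↓, barred
            have hyeven : natKey z % 2 = 0 := by rw [parity_key, hyu]; rfl
            have hxbar : x.2 = true := barred_of_odd (by omega)
            obtain ⟨m, rest, heq, hlt, hch⟩ := chain_decomp x xs' hchain'
            cases rest with
            | nil =>
              rw [List.append_nil] at heq
              calc Wq N (u ++ z :: ((x :: xs') ++ [z]))
                  = Wq N (u ++ z :: (List.replicate (m + 1) x ++ z :: [])) := by
                    rw [heq]
                _ = Wq N (u ++ z :: z :: (List.replicate (m + 1) x ++ [])) :=
                    lemM z x hyu hxbar hxlt (m + 1) u []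
                _ = Wq N (u ++ z :: z :: (x :: xs')) := by rw [heq]; simp
            | cons d rest' =>
              have hd : natKey d < natKey x := hlt d (List.mem_cons_self)
              by_cases hdc : natKey d + 1 = natKey x
              · -- d = z↓↓, use lemP
                have hdu : d.2 = false := unbarred_of_even (by omega)
                have hstrict := chain_lt_unbarred hch hdu
                have hmv := moveZ z rest'
                  (fun r hr => by have := hstrict r hr; omega)
                  (u ++ z :: List.replicate (m + 1) x ++ [d])
                calc Wq N (u ++ z :: ((x :: xs') ++ [z]))
                    = Wq N ((u ++ z :: List.replicate (m + 1) x ++ [d]) ++ rest' ++ [z]) := by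
                      rw [heq]; simp [List.append_assoc]
                  _ = Wq N ((u ++ z :: List.replicate (m + 1) x ++ [d]) ++ z :: rest') := hmv
                  _ = Wq N (u ++ z :: (List.replicate (m + 1) x ++ d :: z :: rest')) := by
                      simp [List.append_assoc]
                  _ = Wq N (u ++ z :: z :: (List.replicate (m + 1) x ++ d :: rest')) :=
                      lemP z x d hyu hxbar hdc hx1 (m + 1) u rest'
                  _ = Wq N (u ++ z :: z :: (x :: xs')) := by rw [heq]
              · -- all of rest is far from z
                have hmv := moveZ z (d :: rest')
                  (fun r hr => by
                    rcases List.mem_cons.mp hr with rfl | hr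
                    · omega
                    · have := chain_le hch r hr; omega)
                  (u ++ z :: List.replicate (m + 1) x)
                calc Wq N (u ++ z :: ((x :: xs') ++ [z]))
                    = Wq N ((u ++ z :: List.replicate (m + 1) x) ++ (d :: rest') ++ [z]) := by
                      rw [heq]; simp [List.append_assoc]
                  _ = Wq N ((u ++ z :: List.replicate (m + 1) x) ++ z :: d :: rest') := hmv
                  _ = Wq N (u ++ z :: (List.replicate (m + 1) x ++ z :: (d :: rest'))) := by
                      simp [List.append_assoc]
                  _ = Wq N (u ++ z :: z :: (List.replicate (m + 1) x ++ d :: rest')) :=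
                      lemM z x hyu hxbar hxlt (m + 1) u (d :: rest')
                  _ = Wq N (u ++ z :: z :: (x :: xs')) := by rw [heq]
          · -- x = z↓↓ : recursion then rel3
            have hrec := ih xs' hlen' (u ++ [z]) x z hchain' (by omega) (by omega)
              (by rintro ⟨rfl, -⟩; omega)
            calc Wq N (u ++ z :: ((x :: xs') ++ [z]))
                = Wq N ((u ++ [z]) ++ x :: (xs' ++ [z])) := by simp [List.append_assoc]
              _ = Wq N ((u ++ [z]) ++ x :: z :: xs') := hrec
              _ = Wq N (u ++ [z, x, z] ++ xs') := by simp [List.append_assoc]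
              _ = Wq N (u ++ [z, z, x] ++ xs') := (Wq_rel (kronRel.rel3 x z hyu hxlt) u xs').symm
              _ = Wq N (u ++ z :: z :: x :: xs') := by simp [List.append_assoc]
        · -- z = y + 2, so x = y barred
          have hxeq : natKey x = natKey y := by omega
          have hx : x = y := natKey_inj hxeq
          subst hx
          have hxbar : x.2 = true := by
            rcases hGE with h' | ⟨-, h''⟩
            · omega
            · exact h''
          have hrec := ih xs' hlen' (u ++ [x]) x z hchain' (by omega) (by omega)
            (by rintro ⟨rfl, -⟩; omega)
          calc Wq N (u ++ x :: ((x :: xs') ++ [z]))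
              = Wq N ((u ++ [x]) ++ x :: (xs' ++ [z])) := by simp [List.append_assoc]
            _ = Wq N ((u ++ [x]) ++ x :: z :: xs') := hrec
            _ = Wq N (u ++ [x, x, z] ++ xs') := by simp [List.append_assoc]
            _ = Wq N (u ++ [x, z, x] ++ xs') :=
                Wq_rel (kronRel.rel4 x z hxbar (by omega)) u xs'
            _ = Wq N (u ++ x :: z :: x :: xs') := by simp [List.append_assoc]


/-- If `y ≥' x_1 ≥' ⋯ ≥' x_t`, `y ≤ z`, and it is neither the
case that `y = z↓` nor that `y = z` are equal barred letters, then
`y x_1 ⋯ x_t z ≡ y z x_1 ⋯ x_t` modulo `I_Kron`. -/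
theorem decreasing_word_commute (N : ℕ) (y z : Letter N) (xs : List (Letter N))
    (hchain : List.Chain' (fun p q => colGE natKey p q) (y :: xs))
    (hyz : natKey y ≤ natKey z)
    (h1 : ¬ natKey y + 1 = natKey z)
    (h2 : ¬ (y = z ∧ y.2 = true)) :
    RingQuot.mkRingHom (kronRel N) (wrd (y :: xs ++ [z])) =
      RingQuot.mkRingHom (kronRel N) (wrd (y :: z :: xs)) := by
  have := main_aux xs.length xs le_rfl [] y z hchain hyz h1 h2
  simpa [Wq] using this

end NCS
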